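/- Two-point shift symmetry (identity (t18) of the paper): let l, m ∈ {1,…,N} with l ≠ m, and let l' ∈ {1,…,N} be the representative of 2m − l modulo N. Then for every k with 1 ≤ k ≤ N, ∑_{I ⊆ {1,…,N}, |I| = k, m ∈ I and l ∈ I} ∏_{i∈I, j∉I} φ(x_j − x_i) = ∑_{I' ⊆ {1,…,N}, |I'| = k, m ∈ I' and l' ∈ I'} ∏_{i∈I', j∉I'} φ(x_j − x_i). -/

import Mathlib

open Complex Finset

/-- The odd theta function `ϑ(z|τ)`. -/
noncomputable def ϑ (τ : ℂ) (z : ℂ) : ℂ :=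
  -∑' k : ℤ, Complex.exp (Real.pi * Complex.I * τ * ((k : ℂ) + 1 / 2) ^ 2
      + 2 * Real.pi * Complex.I * (z + 1 / 2) * ((k : ℂ) + 1 / 2))

/-- The Kronecker elliptic function `φ(z) = ϑ'(0)·ϑ(z+ħ)/(ϑ(z)·ϑ(ħ))`. -/
noncomputable def φ₁ (τ hbar z : ℂ) : ℂ :=
  deriv (ϑ τ) 0 * ϑ τ (z + hbar) / (ϑ τ z * ϑ τ hbar)

section Aux

lemma theta_add_one (τ z : ℂ) : ϑ τ (z + 1) = -ϑ τ z := by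
  unfold ϑ
  have hterm : ∀ k : ℤ, Complex.exp (Real.pi * Complex.I * τ * ((k : ℂ) + 1 / 2) ^ 2
      + 2 * Real.pi * Complex.I * (z + 1 + 1 / 2) * ((k : ℂ) + 1 / 2))
      = -Complex.exp (Real.pi * Complex.I * τ * ((k : ℂ) + 1 / 2) ^ 2
      + 2 * Real.pi * Complex.I * (z + 1 / 2) * ((k : ℂ) + 1 / 2)) := by
    intro k
    have h1 : Real.pi * Complex.I * τ * ((k : ℂ) + 1 / 2) ^ 2
        + 2 * Real.pi * Complex.I * (z + 1 + 1 / 2) * ((k : ℂ) + 1 / 2)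
        = (Real.pi * Complex.I * τ * ((k : ℂ) + 1 / 2) ^ 2
          + 2 * Real.pi * Complex.I * (z + 1 / 2) * ((k : ℂ) + 1 / 2))
          + ((k : ℂ) * (2 * Real.pi * Complex.I) + Real.pi * Complex.I) := by ring
    have h2 : Complex.exp ((k : ℂ) * (2 * Real.pi * Complex.I) + Real.pi * Complex.I) = -1 := by
      rw [Complex.exp_add, Complex.exp_int_mul_two_pi_mul_I, Complex.exp_pi_mul_I, one_mul]
    rw [h1, Complex.exp_add, h2]
    ring
  rw [tsum_congr hterm, tsum_neg, neg_neg]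

lemma phi_add_one (τ hb z : ℂ) : φ₁ τ hb (z + 1) = φ₁ τ hb z := by
  unfold φ₁
  rw [show z + 1 + hb = (z + hb) + 1 by ring, theta_add_one, theta_add_one,
    mul_neg, neg_mul, neg_div_neg_eq]

lemma phi_add_int (τ hb z : ℂ) (n : ℤ) : φ₁ τ hb (z + n) = φ₁ τ hb z := by
  induction n using Int.induction_on with
  | zero => simp
  | succ n ih =>
      have h : z + ((n : ℤ) + 1 : ℤ) = (z + (n : ℤ)) + 1 := by push_cast; ring
      rw [h, phi_add_one, ih]
  | pred n ih =>
      have h : (z + ((-(n : ℤ) - 1 : ℤ) : ℂ)) + 1 = z + ((-(n : ℤ) : ℤ) : ℂ) := by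
        push_cast; ring
      rw [← ih, ← h, phi_add_one]

lemma phi_congr (τ hb : ℂ) (N : ℕ) (hN : 0 < N) (a b c d : ℕ)
    (h : (a : ZMod N) - (b : ZMod N) = (c : ZMod N) - (d : ZMod N)) :
    φ₁ τ hb ((a : ℂ) / N - (b : ℂ) / N) = φ₁ τ hb ((c : ℂ) / N - (d : ℂ) / N) := by
  haveI : NeZero N := ⟨hN.ne'⟩
  have h2 : ((((a : ℤ) - b) - ((c : ℤ) - d) : ℤ) : ZMod N) = 0 := by
    push_cast
    rw [h, sub_self]
  obtain ⟨e, he⟩ := (ZMod.intCast_zmod_eq_zero_iff_dvd _ _).mp h2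
  have hNc : (N : ℂ) ≠ 0 := Nat.cast_ne_zero.mpr hN.ne'
  have hz : (a : ℂ) / N - (b : ℂ) / N = ((c : ℂ) / N - (d : ℂ) / N) + ((e : ℤ) : ℂ) := by
    have he' : ((a : ℂ) - b) - ((c : ℂ) - d) = (N : ℂ) * e := by
      exact_mod_cast congrArg (fun t : ℤ => (t : ℂ)) he
    field_simp
    linear_combination he'
  rw [hz, phi_add_int]

/-- The representative in `{1,…,N}` of a residue class mod `N`. -/
def rep (N : ℕ) (a : ZMod N) : ℕ := if ZMod.val a = 0 then N else ZMod.val a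

lemma rep_mem {N : ℕ} (hN : 0 < N) (a : ZMod N) : rep N a ∈ Finset.Icc 1 N := by
  haveI : NeZero N := ⟨hN.ne'⟩
  unfold rep
  split
  · exact Finset.mem_Icc.mpr ⟨hN, le_refl N⟩
  · exact Finset.mem_Icc.mpr ⟨Nat.one_le_iff_ne_zero.mpr ‹_›, (ZMod.val_lt a).le⟩

lemma cast_rep {N : ℕ} (hN : 0 < N) (a : ZMod N) : ((rep N a : ℕ) : ZMod N) = a := by
  haveI : NeZero N := ⟨hN.ne'⟩
  unfold rep
  split
  · next h =>
    have h2 := ZMod.natCast_rightInverse (n := N) a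
    rw [h] at h2
    simp only [Nat.cast_zero] at h2
    rw [ZMod.natCast_self, h2]
  · exact ZMod.natCast_rightInverse a

lemma rep_cast {N : ℕ} (hN : 0 < N) {i : ℕ} (hi : i ∈ Finset.Icc 1 N) :
    rep N ((i : ZMod N)) = i := by
  haveI : NeZero N := ⟨hN.ne'⟩
  obtain ⟨h1, h2⟩ := Finset.mem_Icc.mp hi
  unfold rep
  rw [ZMod.val_natCast]
  rcases eq_or_lt_of_le h2 with h | h
  · subst h
    simp
  · rw [Nat.mod_eq_of_lt h]
    simp [Nat.one_le_iff_ne_zero.mp h1]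

lemma cast_injIcc {N : ℕ} (hN : 0 < N) {i j : ℕ} (hi : i ∈ Finset.Icc 1 N)
    (hj : j ∈ Finset.Icc 1 N) (h : (i : ZMod N) = (j : ZMod N)) : i = j := by
  rw [← rep_cast hN hi, h, rep_cast hN hj]

lemma swap_count {N : ℕ} (hN : 0 < N) (I : Finset ℕ) (hI : I ⊆ Finset.Icc 1 N)
    (d : ZMod N) :
    (I.filter (fun i : ℕ => rep N ((i : ZMod N) + d) ∈ I)).card
      = (I.filter (fun i : ℕ => rep N ((i : ZMod N) + (-d)) ∈ I)).card := by
  haveI : NeZero N := ⟨hN.ne'⟩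
  apply Finset.card_bij (fun (i : ℕ) _ => rep N ((i : ZMod N) + d))
  · intro i hi
    obtain ⟨hiI, hmem⟩ := Finset.mem_filter.mp hi
    refine Finset.mem_filter.mpr ⟨hmem, ?_⟩
    rw [cast_rep hN]
    rw [show (i : ZMod N) + d + -d = (i : ZMod N) by ring, rep_cast hN (hI hiI)]
    exact hiI
  · intro a ha b hb h
    have := congrArg (fun x : ℕ => (x : ZMod N)) h
    simp only [cast_rep hN] at this
    have h2 : (a : ZMod N) = (b : ZMod N) := by
      have := add_right_cancel this
      exact this
    exact cast_injIcc hN (hI (Finset.mem_filter.mp ha).1) (hI (Finset.mem_filter.mp hb).1) h2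
  · intro j hj
    obtain ⟨hjI, hmem⟩ := Finset.mem_filter.mp hj
    refine ⟨rep N ((j : ZMod N) + (-d)), Finset.mem_filter.mpr ⟨hmem, ?_⟩, ?_⟩
    · rw [cast_rep hN, show (j : ZMod N) + -d + d = (j : ZMod N) by ring, rep_cast hN (hI hjI)]
      exact hjI
    · rw [cast_rep hN, show (j : ZMod N) + -d + d = (j : ZMod N) by ring, rep_cast hN (hI hjI)]

lemma fiber_count {N : ℕ} (hN : 0 < N) (I : Finset ℕ) (hI : I ⊆ Finset.Icc 1 N)
    (d : ZMod N) :
    ((I ×ˢ (Finset.Icc 1 N \ I)).filter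
        (fun p => (p.2 : ZMod N) - (p.1 : ZMod N) = d)).card
      = (I.filter (fun i : ℕ => rep N ((i : ZMod N) + d) ∉ I)).card := by
  haveI : NeZero N := ⟨hN.ne'⟩
  apply Finset.card_bij (fun (p : ℕ × ℕ) _ => p.1)
  · intro p hp
    obtain ⟨hpP, hpd⟩ := Finset.mem_filter.mp hp
    obtain ⟨hp1, hp2⟩ := Finset.mem_product.mp hpP
    obtain ⟨hp2S, hp2I⟩ := Finset.mem_sdiff.mp hp2
    refine Finset.mem_filter.mpr ⟨hp1, ?_⟩
    have : (p.1 : ZMod N) + d = (p.2 : ZMod N) := by rw [← hpd]; ring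
    rw [this, rep_cast hN hp2S]
    exact hp2I
  · intro p hp q hq h
    obtain ⟨hpP, hpd⟩ := Finset.mem_filter.mp hp
    obtain ⟨hqP, hqd⟩ := Finset.mem_filter.mp hq
    obtain ⟨_, hp2⟩ := Finset.mem_product.mp hpP
    obtain ⟨_, hq2⟩ := Finset.mem_product.mp hqP
    have hp2S := (Finset.mem_sdiff.mp hp2).1
    have hq2S := (Finset.mem_sdiff.mp hq2).1
    have : (p.2 : ZMod N) = (q.2 : ZMod N) := by
      have e1 : (p.2 : ZMod N) = (p.1 : ZMod N) + d := by rw [← hpd]; ring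
      have e2 : (q.2 : ZMod N) = (q.1 : ZMod N) + d := by rw [← hqd]; ring
      rw [e1, e2, h]
    exact Prod.ext h (cast_injIcc hN hp2S hq2S this)
  · intro i hi
    obtain ⟨hiI, hmem⟩ := Finset.mem_filter.mp hi
    refine ⟨(i, rep N ((i : ZMod N) + d)), Finset.mem_filter.mpr ⟨?_, ?_⟩, rfl⟩
    · exact Finset.mem_product.mpr ⟨hiI, Finset.mem_sdiff.mpr ⟨rep_mem hN _, hmem⟩⟩
    · simp only [cast_rep hN]; ring

lemma core {N : ℕ} (hN : 0 < N) (f : ZMod N → ℂ) (I : Finset ℕ)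
    (hI : I ⊆ Finset.Icc 1 N) :
    ∏ i ∈ I, ∏ j ∈ Finset.Icc 1 N \ I, f ((j : ZMod N) - (i : ZMod N))
      = ∏ i ∈ I, ∏ j ∈ Finset.Icc 1 N \ I, f ((i : ZMod N) - (j : ZMod N)) := by
  haveI : NeZero N := ⟨hN.ne'⟩
  set P := I ×ˢ (Finset.Icc 1 N \ I) with hP
  set c : ZMod N → ℕ := fun d =>
    ((P.filter (fun p => (p.2 : ZMod N) - (p.1 : ZMod N) = d))).card with hc
  have hcc : ∀ d, c d = c (-d) := by
    intro d
    have h1 := fiber_count hN I hI d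
    have h2 := fiber_count hN I hI (-d)
    have h3 := Finset.card_filter_add_card_filter_not
      (s := I) (p := fun i : ℕ => rep N ((i : ZMod N) + d) ∈ I)
    have h4 := Finset.card_filter_add_card_filter_not
      (s := I) (p := fun i : ℕ => rep N ((i : ZMod N) + (-d)) ∈ I)
    have h5 := swap_count hN I hI d
    simp only [hc, hP, h1, h2]
    omega
  have fib : ∀ F : ℕ × ℕ → ℂ, ∏ p ∈ P, F p
      = ∏ d : ZMod N, ∏ p ∈ P.filter (fun p => (p.2 : ZMod N) - (p.1 : ZMod N) = d), F p :=
    fun F => (Finset.prod_fiberwise_of_maps_to (fun p _ => Finset.mem_univ _) F).symm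
  have lhs_eq : ∏ i ∈ I, ∏ j ∈ Finset.Icc 1 N \ I, f ((j : ZMod N) - (i : ZMod N))
      = ∏ d : ZMod N, f d ^ c d := by
    rw [← Finset.prod_product', fib]
    refine Finset.prod_congr rfl (fun d _ => ?_)
    rw [Finset.prod_congr rfl (fun p hp => ?_), Finset.prod_const]
    exact congrArg f (Finset.mem_filter.mp hp).2
  have rhs_eq : ∏ i ∈ I, ∏ j ∈ Finset.Icc 1 N \ I, f ((i : ZMod N) - (j : ZMod N))
      = ∏ d : ZMod N, f (-d) ^ c d := by
    rw [← Finset.prod_product', fib]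
    refine Finset.prod_congr rfl (fun d _ => ?_)
    rw [Finset.prod_congr rfl (fun p hp => ?_), Finset.prod_const]
    have := (Finset.mem_filter.mp hp).2
    rw [show ((p.1 : ZMod N) - (p.2 : ZMod N)) = -((p.2 : ZMod N) - (p.1 : ZMod N)) by ring, this]
  rw [lhs_eq, rhs_eq]
  rw [Fintype.prod_equiv (Equiv.neg (ZMod N)) (fun d => f (-d) ^ c d)
    (fun d => f d ^ c (-d)) (fun x => by simp)]
  exact Finset.prod_congr rfl (fun d _ => by rw [← hcc d])

/-- Conversion of `φ₁` of a rational difference to its normal form mod `N`. -/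
lemma phi_eq_f (τ hbar : ℂ) {N : ℕ} (hN : 0 < N) (a b : ℕ) :
    φ₁ τ hbar ((a : ℂ) / N - (b : ℂ) / N)
      = φ₁ τ hbar (((ZMod.val ((a : ZMod N) - (b : ZMod N)) : ℕ) : ℂ) / N) := by
  haveI : NeZero N := ⟨hN.ne'⟩
  have hcond : (a : ZMod N) - (b : ZMod N)
      = ((ZMod.val ((a : ZMod N) - (b : ZMod N)) : ℕ) : ZMod N) - ((0 : ℕ) : ZMod N) := by
    rw [ZMod.natCast_rightInverse, Nat.cast_zero, sub_zero]
  have h := phi_congr τ hbar N hN a b (ZMod.val ((a : ZMod N) - (b : ZMod N))) 0 hcond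
  simpa using h

/-- Reflection about `m` inside `{1,…,N}`. -/
def refl' (N m : ℕ) : ℕ → ℕ := fun i : ℕ => rep N (2 * (m : ZMod N) - (i : ZMod N))

lemma refl'_mem {N : ℕ} (hN : 0 < N) (m i : ℕ) : refl' N m i ∈ Finset.Icc 1 N :=
  rep_mem hN _

lemma cast_refl' {N : ℕ} (hN : 0 < N) (m i : ℕ) :
    ((refl' N m i : ℕ) : ZMod N) = 2 * (m : ZMod N) - (i : ZMod N) :=
  cast_rep hN _

lemma refl'_invol {N : ℕ} (hN : 0 < N) (m : ℕ) {i : ℕ} (hi : i ∈ Finset.Icc 1 N) :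
    refl' N m (refl' N m i) = i := by
  unfold refl'
  rw [cast_rep hN, show 2 * (m : ZMod N) - (2 * (m : ZMod N) - (i : ZMod N)) = (i : ZMod N)
    by ring, rep_cast hN hi]

lemma refl'_injIcc {N : ℕ} (hN : 0 < N) (m : ℕ) {i j : ℕ} (hi : i ∈ Finset.Icc 1 N)
    (hj : j ∈ Finset.Icc 1 N) (h : refl' N m i = refl' N m j) : i = j := by
  rw [← refl'_invol hN m hi, h, refl'_invol hN m hj]

lemma refl'_sdiff {N : ℕ} (hN : 0 < N) (m : ℕ) (I : Finset ℕ) (hI : I ⊆ Finset.Icc 1 N) :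
    Finset.Icc 1 N \ (I.image (refl' N m)) = (Finset.Icc 1 N \ I).image (refl' N m) := by
  ext x
  simp only [Finset.mem_sdiff, Finset.mem_image]
  constructor
  · rintro ⟨hx, hnx⟩
    exact ⟨refl' N m x, ⟨refl'_mem hN m x, fun hmem => hnx ⟨refl' N m x, hmem,
      refl'_invol hN m hx⟩⟩, refl'_invol hN m hx⟩
  · rintro ⟨j, ⟨hjS, hjI⟩, rfl⟩
    refine ⟨refl'_mem hN m j, ?_⟩
    rintro ⟨i, hiI, hij⟩
    exact hjI ((refl'_injIcc hN m (hI hiI) hjS hij) ▸ hiI)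

/-- The key per-term identity : the double product is invariant under reflection. -/
lemma term_eq (τ hbar : ℂ) {N : ℕ} (hN : 0 < N) (m : ℕ) (I : Finset ℕ)
    (hI : I ⊆ Finset.Icc 1 N) :
    ∏ i ∈ I.image (refl' N m), ∏ j ∈ Finset.Icc 1 N \ I.image (refl' N m),
        φ₁ τ hbar ((j : ℂ) / N - (i : ℂ) / N)
      = ∏ i ∈ I, ∏ j ∈ Finset.Icc 1 N \ I, φ₁ τ hbar ((j : ℂ) / N - (i : ℂ) / N) := by
  haveI : NeZero N := ⟨hN.ne'⟩
  set f : ZMod N → ℂ := fun d => φ₁ τ hbar (((ZMod.val d : ℕ) : ℂ) / N) with hf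
  have hphif : ∀ a b : ℕ, φ₁ τ hbar ((a : ℂ) / N - (b : ℂ) / N)
      = f ((a : ZMod N) - (b : ZMod N)) := fun a b => phi_eq_f τ hbar hN a b
  have hinjI : ∀ x ∈ I, ∀ y ∈ I, refl' N m x = refl' N m y → x = y :=
    fun x hx y hy h => refl'_injIcc hN m (hI hx) (hI hy) h
  have hinjC : ∀ x ∈ Finset.Icc 1 N \ I, ∀ y ∈ Finset.Icc 1 N \ I,
      refl' N m x = refl' N m y → x = y :=
    fun x hx y hy h =>
      refl'_injIcc hN m ((Finset.mem_sdiff.mp hx).1) ((Finset.mem_sdiff.mp hy).1) h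
  rw [refl'_sdiff hN m I hI, Finset.prod_image hinjI]
  calc ∏ i ∈ I, ∏ j ∈ (Finset.Icc 1 N \ I).image (refl' N m),
        φ₁ τ hbar ((j : ℂ) / N - ((refl' N m i : ℕ) : ℂ) / N)
      = ∏ i ∈ I, ∏ j ∈ Finset.Icc 1 N \ I,
          φ₁ τ hbar (((refl' N m j : ℕ) : ℂ) / N - ((refl' N m i : ℕ) : ℂ) / N) :=
        Finset.prod_congr rfl (fun i _ => Finset.prod_image hinjC)
    _ = ∏ i ∈ I, ∏ j ∈ Finset.Icc 1 N \ I, f ((i : ZMod N) - (j : ZMod N)) := by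
        refine Finset.prod_congr rfl (fun i _ => Finset.prod_congr rfl (fun j _ => ?_))
        rw [hphif, cast_refl' hN, cast_refl' hN]
        congr 1
        ring
    _ = ∏ i ∈ I, ∏ j ∈ Finset.Icc 1 N \ I, f ((j : ZMod N) - (i : ZMod N)) :=
        (core hN f I hI).symm
    _ = ∏ i ∈ I, ∏ j ∈ Finset.Icc 1 N \ I, φ₁ τ hbar ((j : ℂ) / N - (i : ℂ) / N) :=
        Finset.prod_congr rfl (fun i _ => Finset.prod_congr rfl (fun j _ => (hphif j i).symm))

end Aux

/-- Identity (t18) of the paper: two-point shift symmetry, where `l'` is the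
representative of `2m − l` modulo `N` in `{1,…,N}`. -/
theorem two_point_shift_symmetry (τ : ℂ) (hτ : 0 < τ.im) (hbar : ℂ) (N : ℕ) (hN : 0 < N)
    (k : ℕ) (hk1 : 1 ≤ k) (hkN : k ≤ N) (l m l' : ℕ)
    (hl : l ∈ Finset.Icc 1 N) (hm : m ∈ Finset.Icc 1 N) (hlm : l ≠ m)
    (hl' : l' ∈ Finset.Icc 1 N)
    (hl'mod : (l' : ℤ) ≡ 2 * (m : ℤ) - (l : ℤ) [ZMOD (N : ℤ)]) :
    ∑ I ∈ ((Finset.Icc 1 N).powersetCard k).filter (fun I => m ∈ I ∧ l ∈ I),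
      ∏ i ∈ I, ∏ j ∈ Finset.Icc 1 N \ I, φ₁ τ hbar ((j : ℂ) / N - (i : ℂ) / N)
    = ∑ I ∈ ((Finset.Icc 1 N).powersetCard k).filter (fun I => m ∈ I ∧ l' ∈ I),
        ∏ i ∈ I, ∏ j ∈ Finset.Icc 1 N \ I, φ₁ τ hbar ((j : ℂ) / N - (i : ℂ) / N) := by
  haveI : NeZero N := ⟨hN.ne'⟩
  have hl'cast : ((l' : ℕ) : ZMod N) = 2 * (m : ZMod N) - (l : ZMod N) := by
    have h := (ZMod.intCast_eq_intCast_iff _ _ _).mpr hl'mod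
    push_cast at h
    exact h
  have hρm : refl' N m m = m := by
    unfold refl'
    rw [show 2 * (m : ZMod N) - (m : ZMod N) = (m : ZMod N) by ring, rep_cast hN hm]
  have hρl : refl' N m l = l' := by
    unfold refl'
    rw [← hl'cast, rep_cast hN hl']
  have hρl' : refl' N m l' = l := by
    unfold refl'
    rw [hl'cast, show 2 * (m : ZMod N) - (2 * (m : ZMod N) - (l : ZMod N)) = (l : ZMod N)
      by ring, rep_cast hN hl]
  have hmapsto : ∀ (I : Finset ℕ), I ⊆ Finset.Icc 1 N →
      I.image (refl' N m) ∈ (Finset.Icc 1 N).powersetCard (I.card) := by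
    intro I hI
    rw [Finset.mem_powersetCard]
    constructor
    · exact Finset.image_subset_iff.mpr (fun i _ => refl'_mem hN m i)
    · exact Finset.card_image_of_injOn (fun x hx y hy h => refl'_injIcc hN m (hI hx) (hI hy) h)
  have hretr : ∀ (I : Finset ℕ), I ⊆ Finset.Icc 1 N →
      (I.image (refl' N m)).image (refl' N m) = I := by
    intro I hI
    rw [Finset.image_image]
    calc I.image (refl' N m ∘ refl' N m) = I.image id :=
          Finset.image_congr (fun x hx => refl'_invol hN m (hI hx))
      _ = I := Finset.image_id
  refine Finset.sum_nbij' (fun I => I.image (refl' N m)) (fun I => I.image (refl' N m))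
    ?_ ?_ ?_ ?_ ?_
  · intro I hI
    rw [Finset.mem_filter, Finset.mem_powersetCard] at hI
    obtain ⟨⟨hIsub, hIcard⟩, hmI, hlI⟩ := hI
    rw [Finset.mem_filter]
    refine ⟨hIcard ▸ hmapsto I hIsub, ?_, ?_⟩
    · exact Finset.mem_image.mpr ⟨m, hmI, hρm⟩
    · exact Finset.mem_image.mpr ⟨l, hlI, hρl⟩
  · intro I hI
    rw [Finset.mem_filter, Finset.mem_powersetCard] at hI
    obtain ⟨⟨hIsub, hIcard⟩, hmI, hlI⟩ := hI
    rw [Finset.mem_filter]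
    refine ⟨hIcard ▸ hmapsto I hIsub, ?_, ?_⟩
    · exact Finset.mem_image.mpr ⟨m, hmI, hρm⟩
    · exact Finset.mem_image.mpr ⟨l', hlI, hρl'⟩
  · intro I hI
    rw [Finset.mem_filter, Finset.mem_powersetCard] at hI
    exact hretr I hI.1.1
  · intro I hI
    rw [Finset.mem_filter, Finset.mem_powersetCard] at hI
    exact hretr I hI.1.1
  · intro I hI
    rw [Finset.mem_filter, Finset.mem_powersetCard] at hI
    exact (term_eq τ hbar hN m I hI.1.1).symm
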